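/- Let C, A_1, …, A_m be real symmetric n×n matrices, b ∈ ℝ^m, α ≥ 0, λ ∈ ℝ^m, and σ ≥ 0. Suppose X* ∈ Δ_α satisfies 𝒜(X*) = b and attains the minimum of ⟨C, Z⟩ over {Z ∈ Δ_α : 𝒜(Z) = b}. For X ∈ Δ_α, write p(X) = 𝒜(X) − b and λ' = λ − σ p(X). Then the surrogate duality bound ⟨C, X − X*⟩ ≤ ⟨C, X⟩ − bᵀλ' + (σ/2)‖p(X)‖² − α · min{λ_min(C − 𝒜*(λ')), 0} holds. -/

import Mathlib

open Matrix BigOperators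

/-- Frobenius inner product of two real matrices. -/
noncomputable def ip {n : ℕ} (A B : Matrix (Fin n) (Fin n) ℝ) : ℝ := ∑ i, ∑ j, A i j * B i j

/-- Δ_α = {X ⪰ 0 : trace(X) ≤ α}. -/
def Delta (n : ℕ) (α : ℝ) : Set (Matrix (Fin n) (Fin n) ℝ) :=
  {X | X.PosSemidef ∧ X.trace ≤ α}

/-- Smallest eigenvalue of a real symmetric (Hermitian) matrix. -/
noncomputable def lambdaMin {n : ℕ} (M : Matrix (Fin n) (Fin n) ℝ) : ℝ :=
  if h : M.IsHermitian then ⨅ i, h.eigenvalues i else 0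

lemma ip_eq_trace {n : ℕ} (A B : Matrix (Fin n) (Fin n) ℝ) : ip A B = (Aᵀ * B).trace := by
  simp only [ip, Matrix.trace, Matrix.diag, Matrix.mul_apply, Matrix.transpose_apply]
  rw [Finset.sum_comm]

open scoped MatrixOrder in
lemma psd_eq_ct {n : ℕ} {P : Matrix (Fin n) (Fin n) ℝ} (hP : P.PosSemidef) :
    ∃ B : Matrix (Fin n) (Fin n) ℝ, P = Bᴴ * B := by
  obtain ⟨B, hB⟩ := CStarAlgebra.nonneg_iff_eq_star_mul_self.mp hP.nonneg
  exact ⟨B, hB⟩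

lemma ip_psd_nonneg {n : ℕ} {P Q : Matrix (Fin n) (Fin n) ℝ}
    (hP : P.PosSemidef) (hQ : Q.PosSemidef) : 0 ≤ ip P Q := by
  obtain ⟨B, rfl⟩ := psd_eq_ct hP
  obtain ⟨Cm, rfl⟩ := psd_eq_ct hQ
  rw [ip_eq_trace]
  have h1 : (Bᴴ * B)ᵀ = Bᴴ * B := by
    rw [← Matrix.conjTranspose_eq_transpose_of_trivial]; exact hP.isHermitian.eq
  rw [h1, Matrix.mul_assoc, Matrix.trace_mul_comm]
  have h2 : B * (Cmᴴ * Cm) * Bᴴ = (Cm * Bᴴ)ᴴ * (Cm * Bᴴ) := by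
    simp [Matrix.conjTranspose_mul, Matrix.mul_assoc]
  rw [h2]
  have h3 : ∀ M : Matrix (Fin n) (Fin n) ℝ, 0 ≤ (Mᴴ * M).trace := by
    intro M
    rw [Matrix.trace]
    refine Finset.sum_nonneg fun i _ => ?_
    simp only [Matrix.diag, Matrix.mul_apply, Matrix.conjTranspose_apply, RCLike.star_def]
    exact Finset.sum_nonneg fun j _ => by simpa using mul_self_nonneg (M j i)
  exact h3 _

lemma ip_one {n : ℕ} (X : Matrix (Fin n) (Fin n) ℝ) : ip 1 X = X.trace := by
  simp [ip, Matrix.one_apply, Matrix.trace, Matrix.diag]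

lemma ip_sub_left {n : ℕ} (A B X : Matrix (Fin n) (Fin n) ℝ) :
    ip (A - B) X = ip A X - ip B X := by
  simp [ip, sub_mul, Finset.sum_sub_distrib]

lemma ip_smul_left {n : ℕ} (c : ℝ) (A X : Matrix (Fin n) (Fin n) ℝ) :
    ip (c • A) X = c * ip A X := by
  simp [ip, Finset.mul_sum, mul_assoc]

lemma ip_sum_left {n m : ℕ} (M : Fin m → Matrix (Fin n) (Fin n) ℝ) (X : Matrix (Fin n) (Fin n) ℝ) :
    ip (∑ i, M i) X = ∑ i, ip (M i) X := by
  unfold ip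
  simp only [Matrix.sum_apply, Finset.sum_mul]
  have h : ∀ a, ∑ b, ∑ k, M k a b * X a b = ∑ k, ∑ b, M k a b * X a b :=
    fun a => Finset.sum_comm
  simp_rw [h]
  exact Finset.sum_comm

lemma trace_nonneg_of_psd {n : ℕ} {X : Matrix (Fin n) (Fin n) ℝ} (hX : X.PosSemidef) :
    0 ≤ X.trace := by
  obtain ⟨B, rfl⟩ := psd_eq_ct hX
  rw [Matrix.trace]
  refine Finset.sum_nonneg fun i _ => ?_
  simp only [Matrix.diag, Matrix.mul_apply, Matrix.conjTranspose_apply, RCLike.star_def]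
  exact Finset.sum_nonneg fun j _ => by simpa using mul_self_nonneg (B j i)

lemma sub_lambdaMin_smul_one_psd {n : ℕ} {D : Matrix (Fin n) (Fin n) ℝ}
    (hD : D.IsHermitian) : (D - lambdaMin D • 1).PosSemidef := by
  rcases Nat.eq_zero_or_pos n with hn | hn
  · subst hn
    refine ⟨?_, fun x => ?_⟩
    · ext i j; exact absurd i.2 (by omega)
    · simp [dotProduct, Subsingleton.elim x 0]
  · have : Nonempty (Fin n) := ⟨⟨0, hn⟩⟩
    set c := lambdaMin D with hc
    have hcdef : c = ⨅ i, hD.eigenvalues i := by rw [hc, lambdaMin, dif_pos hD]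
    have hle : ∀ i, c ≤ hD.eigenvalues i := fun i => by
      rw [hcdef]; exact ciInf_le (Finite.bddBelow_range _) i
    set U : Matrix (Fin n) (Fin n) ℝ := (hD.eigenvectorUnitary : Matrix (Fin n) (Fin n) ℝ)
      with hU
    have hUU : U * star U = 1 := Matrix.mem_unitaryGroup_iff.mp hD.eigenvectorUnitary.2
    have hspec : D = U * Matrix.diagonal hD.eigenvalues * star U := by
      have := hD.spectral_theorem
      simpa [hU, Function.comp] using this
    have hsm : c • (1 : Matrix (Fin n) (Fin n) ℝ) = Matrix.diagonal (fun _ => c) := by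
      ext i j; by_cases h : i = j <;> simp [Matrix.one_apply, Matrix.diagonal_apply, h]
    have hkey : D - c • 1 = U * Matrix.diagonal (fun i => hD.eigenvalues i - c) * Uᴴ := by
      have hd : Matrix.diagonal (fun i => hD.eigenvalues i - c)
          = Matrix.diagonal hD.eigenvalues - c • 1 := by
        rw [hsm, ← Matrix.diagonal_sub]
      rw [hd, ← Matrix.star_eq_conjTranspose, Matrix.mul_sub, Matrix.sub_mul,
        ← hspec]
      congr 1
      rw [Matrix.mul_smul, Matrix.mul_one, Matrix.smul_mul, hUU]
    rw [hkey]
    exact (Matrix.posSemidef_diagonal_iff.mpr fun i =>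
      sub_nonneg.mpr (hle i)).mul_mul_conjTranspose_same U

lemma key_bound {n : ℕ} {D X : Matrix (Fin n) (Fin n) ℝ} {α : ℝ}
    (hD : D.IsHermitian) (hX : X.PosSemidef) (hXt : X.trace ≤ α) (hα : 0 ≤ α) :
    α * min (lambdaMin D) 0 ≤ ip D X := by
  have h1 : 0 ≤ ip (D - lambdaMin D • 1) X :=
    ip_psd_nonneg (sub_lambdaMin_smul_one_psd hD) hX
  rw [ip_sub_left, ip_smul_left, ip_one] at h1
  have htr : 0 ≤ X.trace := trace_nonneg_of_psd hX
  rcases le_or_gt 0 (lambdaMin D) with h | h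
  · rw [min_eq_right h]
    nlinarith
  · rw [min_eq_left h.le]
    nlinarith

/-- The SketchyCGAL surrogate duality bound: if `Xstar ∈ Δ_α` is optimal for the
trace-bounded SDP, then for every `X ∈ Δ_α`, with `p(X) = 𝒜(X) − b` and
`λ' = λ − σ p(X)`,
`⟨C, X − Xstar⟩ ≤ ⟨C, X⟩ − bᵀλ' + (σ/2)‖p(X)‖² − α·min{λ_min(C − 𝒜*(λ')), 0}`. -/
theorem surrogate_duality_bound
    (n m : ℕ)
    (C : Matrix (Fin n) (Fin n) ℝ) (hC : C.IsHermitian)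
    (A : Fin m → Matrix (Fin n) (Fin n) ℝ) (hA : ∀ i, (A i).IsHermitian)
    (b : Fin m → ℝ) (α : ℝ) (hα : 0 ≤ α)
    (lam : Fin m → ℝ) (σ : ℝ) (hσ : 0 ≤ σ)
    (Xstar : Matrix (Fin n) (Fin n) ℝ)
    (hXstar : Xstar ∈ Delta n α) (hXstarFeas : ∀ i, ip (A i) Xstar = b i)
    (hOpt : ∀ Z ∈ Delta n α, (∀ i, ip (A i) Z = b i) → ip C Xstar ≤ ip C Z)
    (X : Matrix (Fin n) (Fin n) ℝ) (hX : X ∈ Delta n α) :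
    let p : Fin m → ℝ := fun i => ip (A i) X - b i
    let lam' : Fin m → ℝ := fun i => lam i - σ * p i
    ip C X - ip C Xstar ≤
      ip C X - (∑ i, b i * lam' i) + (σ / 2) * (∑ i, (p i) ^ 2)
        - α * min (lambdaMin (C - ∑ i, lam' i • A i)) 0 := by
  intro p lam'
  set D : Matrix (Fin n) (Fin n) ℝ := C - ∑ i, lam' i • A i with hDdef
  have hD : D.IsHermitian := by
    rw [hDdef]
    refine hC.sub ?_
    unfold Matrix.IsHermitian
    rw [Matrix.conjTranspose_sum]
    refine Finset.sum_congr rfl fun i _ => ?_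
    rw [Matrix.conjTranspose_smul, (hA i).eq]
    simp
  have hkey : α * min (lambdaMin D) 0 ≤ ip D Xstar :=
    key_bound hD hXstar.1 hXstar.2 hα
  have hsplit : ip D Xstar = ip C Xstar - ∑ i, lam' i * b i := by
    rw [hDdef, ip_sub_left, ip_sum_left]
    congr 1
    refine Finset.sum_congr rfl fun i _ => ?_
    rw [ip_smul_left, hXstarFeas i]
  have hsq : 0 ≤ (σ / 2) * ∑ i, (p i) ^ 2 := by
    have : 0 ≤ ∑ i, (p i) ^ 2 := Finset.sum_nonneg fun i _ => sq_nonneg _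
    positivity
  have hbl : ∑ i, b i * lam' i = ∑ i, lam' i * b i :=
    Finset.sum_congr rfl fun i _ => mul_comm _ _
  rw [hbl]
  linarith [hkey, hsplit, hsq]
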